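/- Let N ≥ 2 be an integer, let Φ : ℤ → ℂ be N-periodic, and let a ∈ ℂ satisfy a^N = 1 and a ≠ 1. Then for any integer n₀, | Σ_{n=n₀}^{n₀+N−1} Φ(n) a^n | ≤ |a − 1|^{−2} Σ_{n=n₀}^{n₀+N−1} |Φ(n+2) − 2Φ(n+1) + Φ(n)|. In particular, for Φ 3p-periodic and ξ ∈ {1,…,3p−1}, | Σ_{n=−p}^{2p−1} Φ(n) e^{−2πi n ξ/3p} | ≤ |e^{−2πi ξ/3p} − 1|^{−2} ‖Δ²Φ‖_{ℓ¹([−p,2p−1])}, where ΔΦ(n) = Φ(n+1) − Φ(n). -/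

import Mathlib

open Finset

lemma sum_shift' {M : Type*} [AddCommMonoid M] (f : ℤ → M) (a b c : ℤ) :
    ∑ n ∈ Icc a b, f (n + c) = ∑ n ∈ Icc (a + c) (b + c), f n := by
  rw [← Finset.map_add_right_Icc, Finset.sum_map]; rfl

lemma window_shift' {M : Type*} [AddCommMonoid M] (N : ℕ) (hN : 1 ≤ N)
    (h : ℤ → M) (hp : ∀ n : ℤ, h (n + N) = h n) (n₀ : ℤ) :
    ∑ n ∈ Icc (n₀ + 1) (n₀ + N), h n = ∑ n ∈ Icc n₀ (n₀ + N - 1), h n := by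
  have e1 : Icc (n₀ + 1) (n₀ + (N:ℤ)) = insert (n₀ + N) (Icc (n₀ + 1) (n₀ + N - 1)) := by
    ext x; simp only [mem_Icc, mem_insert]; omega
  have e2 : Icc n₀ (n₀ + (N:ℤ) - 1) = insert n₀ (Icc (n₀ + 1) (n₀ + N - 1)) := by
    ext x; simp only [mem_Icc, mem_insert]; omega
  rw [e1, e2, Finset.sum_insert (by simp only [mem_Icc]; omega),
    Finset.sum_insert (by simp only [mem_Icc]; omega), hp n₀, add_comm (h n₀)]

lemma step' (N : ℕ) (hN : 2 ≤ N) (Φ : ℤ → ℂ) (hper : ∀ n : ℤ, Φ (n + N) = Φ n)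
    (a : ℂ) (haN : a ^ N = 1) (n₀ : ℤ) :
    a * ∑ n ∈ Icc n₀ (n₀ + N - 1), Φ n * a ^ n
      = ∑ n ∈ Icc n₀ (n₀ + N - 1), Φ (n - 1) * a ^ n := by
  have ha0 : a ≠ 0 := by
    intro h; rw [h, zero_pow (by omega : N ≠ 0)] at haN; exact zero_ne_one haN
  have hz : a ^ (N:ℤ) = 1 := by rw [zpow_natCast]; exact haN
  have hper' : ∀ n : ℤ, Φ (n + (N:ℤ) - 1) * a ^ (n + (N:ℤ)) = Φ (n - 1) * a ^ n := by
    intro n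
    rw [show n + (N:ℤ) - 1 = (n - 1) + N by ring, hper, zpow_add₀ ha0, hz, mul_one]
  calc a * ∑ n ∈ Icc n₀ (n₀ + N - 1), Φ n * a ^ n
      = ∑ n ∈ Icc n₀ (n₀ + N - 1), Φ (n + 1 - 1) * a ^ (n + 1) := by
        rw [Finset.mul_sum]
        refine Finset.sum_congr rfl fun n _ => ?_
        rw [add_sub_cancel_right, zpow_add_one₀ ha0]; ring
    _ = ∑ n ∈ Icc (n₀ + 1) (n₀ + N - 1 + 1), Φ (n - 1) * a ^ n :=
        sum_shift' (fun n => Φ (n - 1) * a ^ n) _ _ 1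
    _ = ∑ n ∈ Icc (n₀ + 1) (n₀ + N), Φ (n - 1) * a ^ n := by
        rw [show n₀ + (N:ℤ) - 1 + 1 = n₀ + N by ring]
    _ = ∑ n ∈ Icc n₀ (n₀ + N - 1), Φ (n - 1) * a ^ n :=
        window_shift' N (by omega) _ (fun n => hper' n) n₀

lemma key' (N : ℕ) (hN : 2 ≤ N) (Φ : ℤ → ℂ) (hper : ∀ n : ℤ, Φ (n + N) = Φ n)
    (a : ℂ) (haN : a ^ N = 1) (ha : a ≠ 1) (n₀ : ℤ) :
    ‖∑ n ∈ Icc n₀ (n₀ + N - 1), Φ n * a ^ n‖ ≤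
      (‖a - 1‖ ^ 2)⁻¹ * ∑ n ∈ Icc n₀ (n₀ + N - 1), ‖Φ (n + 2) - 2 * Φ (n + 1) + Φ n‖ := by
  have hna : ‖a‖ = 1 := by
    have h1 : ‖a‖ ^ N = 1 := by rw [← norm_pow, haN, norm_one]
    rcases lt_trichotomy ‖a‖ 1 with h | h | h
    · have h2 : ‖a‖ ^ N < 1 := pow_lt_one₀ (norm_nonneg a) h (by omega)
      linarith
    · exact h
    · have h2 : 1 < ‖a‖ ^ N := one_lt_pow₀ h (by omega)
      linarith
  set Φ₁ : ℤ → ℂ := fun n => Φ (n - 1) - Φ n with hΦ₁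
  have hper1 : ∀ n : ℤ, Φ₁ (n + N) = Φ₁ n := by
    intro n
    simp only [hΦ₁]
    rw [show n + (N:ℤ) - 1 = (n - 1) + N by ring, hper, hper]
  set S := ∑ n ∈ Icc n₀ (n₀ + N - 1), Φ n * a ^ n with hS
  have h1 : (a - 1) * S = ∑ n ∈ Icc n₀ (n₀ + N - 1), Φ₁ n * a ^ n := by
    rw [sub_mul, one_mul, step' N hN Φ hper a haN n₀, hS, ← Finset.sum_sub_distrib]
    refine Finset.sum_congr rfl fun n _ => ?_
    simp only [hΦ₁]; ring
  have h2 : (a - 1) * ((a - 1) * S)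
      = ∑ n ∈ Icc n₀ (n₀ + N - 1), (Φ₁ (n - 1) - Φ₁ n) * a ^ n := by
    rw [h1, sub_mul, one_mul, step' N hN Φ₁ hper1 a haN n₀, ← Finset.sum_sub_distrib]
    refine Finset.sum_congr rfl fun n _ => ?_
    ring
  set g : ℤ → ℝ := fun m => ‖Φ (m + 2) - 2 * Φ (m + 1) + Φ m‖ with hg
  have gper : ∀ n : ℤ, g (n + N) = g n := by
    intro n
    simp only [hg]
    rw [show n + (N:ℤ) + 2 = (n + 2) + N by ring, show n + (N:ℤ) + 1 = (n + 1) + N by ring,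
      hper, hper, hper]
  have hterm : ∀ n : ℤ, ‖(Φ₁ (n - 1) - Φ₁ n) * a ^ n‖ = g (n - 2) := by
    intro n
    rw [norm_mul, norm_zpow, hna, one_zpow, mul_one]
    simp only [hΦ₁, hg]
    congr 1
    rw [show n - 2 + 2 = n by ring, show n - 2 + 1 = n - 1 by ring]
    ring
  have hshift : ∑ n ∈ Icc n₀ (n₀ + N - 1), g (n - 2) = ∑ n ∈ Icc n₀ (n₀ + N - 1), g n := by
    calc ∑ n ∈ Icc n₀ (n₀ + N - 1), g (n - 2)
        = ∑ n ∈ Icc n₀ (n₀ + N - 1), g (n + (-2)) := by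
          refine Finset.sum_congr rfl fun n _ => ?_
          rw [show n + (-2:ℤ) = n - 2 by ring]
      _ = ∑ n ∈ Icc (n₀ + (-2)) (n₀ + N - 1 + (-2)), g n := sum_shift' g _ _ (-2)
      _ = ∑ n ∈ Icc (n₀ - 2) (n₀ - 2 + N - 1), g n := by
          rw [show n₀ + (-2:ℤ) = n₀ - 2 by ring, show n₀ + (N:ℤ) - 1 + (-2) = n₀ - 2 + N - 1 by ring]
      _ = ∑ n ∈ Icc (n₀ - 2 + 1) (n₀ - 2 + N), g n :=
          (window_shift' N (by omega) g gper (n₀ - 2)).symm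
      _ = ∑ n ∈ Icc (n₀ - 1) (n₀ - 1 + N - 1), g n := by
          rw [show n₀ - 2 + 1 = n₀ - 1 by ring, show n₀ - 2 + (N:ℤ) = n₀ - 1 + N - 1 by ring]
      _ = ∑ n ∈ Icc (n₀ - 1 + 1) (n₀ - 1 + N), g n :=
          (window_shift' N (by omega) g gper (n₀ - 1)).symm
      _ = ∑ n ∈ Icc n₀ (n₀ + N - 1), g n := by
          rw [show n₀ - 1 + 1 = n₀ by ring, show n₀ - 1 + (N:ℤ) = n₀ + N - 1 by ring]
  have hbound : ‖a - 1‖ ^ 2 * ‖S‖ ≤ ∑ n ∈ Icc n₀ (n₀ + N - 1), g n := by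
    calc ‖a - 1‖ ^ 2 * ‖S‖ = ‖(a - 1) * ((a - 1) * S)‖ := by
          rw [norm_mul, norm_mul]; ring
      _ = ‖∑ n ∈ Icc n₀ (n₀ + N - 1), (Φ₁ (n - 1) - Φ₁ n) * a ^ n‖ := by rw [h2]
      _ ≤ ∑ n ∈ Icc n₀ (n₀ + N - 1), ‖(Φ₁ (n - 1) - Φ₁ n) * a ^ n‖ := norm_sum_le _ _
      _ = ∑ n ∈ Icc n₀ (n₀ + N - 1), g (n - 2) :=
          Finset.sum_congr rfl fun n _ => hterm n
      _ = ∑ n ∈ Icc n₀ (n₀ + N - 1), g n := hshift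
  have hpos : (0:ℝ) < ‖a - 1‖ ^ 2 := by
    have h0 : a - 1 ≠ 0 := sub_ne_zero.mpr ha
    exact pow_pos (norm_pos_iff.mpr h0) 2
  have h3 : ‖S‖ = (‖a - 1‖ ^ 2)⁻¹ * (‖a - 1‖ ^ 2 * ‖S‖) := by
    rw [← mul_assoc, inv_mul_cancel₀ hpos.ne', one_mul]
  rw [h3]
  gcongr



/-- **Lemma (double summation by parts).**
Let `N ≥ 2`, let `Φ : ℤ → ℂ` be `N`-periodic, and let `a ∈ ℂ` satisfy `a^N = 1`,
`a ≠ 1`.  Then for any `n₀`,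
`|∑_{n=n₀}^{n₀+N-1} Φ(n) aⁿ| ≤ |a-1|⁻² ∑_{n=n₀}^{n₀+N-1} |Φ(n+2) - 2Φ(n+1) + Φ(n)|`.
In particular, for `Φ` `3p`-periodic and `ξ ∈ {1,…,3p-1}`,
`|∑_{n=-p}^{2p-1} Φ(n) e^{-2πinξ/3p}| ≤ |e^{-2πiξ/3p} - 1|⁻² ‖Δ²Φ‖_{ℓ¹([-p,2p-1])}`. -/
theorem abel_summation_second_difference_bound
    (N : ℕ) (hN : 2 ≤ N) (Φ : ℤ → ℂ) (hper : ∀ n : ℤ, Φ (n + N) = Φ n)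
    (a : ℂ) (haN : a ^ N = 1) (ha : a ≠ 1) (n₀ : ℤ) :
    (‖∑ n ∈ Finset.Icc n₀ (n₀ + N - 1), Φ n * a ^ n‖ ≤
      (‖a - 1‖ ^ 2)⁻¹ *
        ∑ n ∈ Finset.Icc n₀ (n₀ + N - 1), ‖Φ (n + 2) - 2 * Φ (n + 1) + Φ n‖) ∧
    ∀ p : ℕ, 0 < p → ∀ Ψ : ℤ → ℂ, (∀ n : ℤ, Ψ (n + 3 * p) = Ψ n) →
      ∀ ξ : ℕ, 1 ≤ ξ → ξ ≤ 3 * p - 1 →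
      ‖∑ n ∈ Finset.Icc (-(p : ℤ)) (2 * (p : ℤ) - 1),
          Ψ n * Complex.exp (-2 * Real.pi * Complex.I * (ξ : ℂ) * (n : ℂ) / (3 * (p : ℂ)))‖
        ≤ (‖Complex.exp (-2 * Real.pi * Complex.I * (ξ : ℂ) / (3 * (p : ℂ))) - 1‖ ^ 2)⁻¹ *
          ∑ n ∈ Finset.Icc (-(p : ℤ)) (2 * (p : ℤ) - 1),
            ‖Ψ (n + 2) - 2 * Ψ (n + 1) + Ψ n‖ := by

  constructor
  · exact key' N hN Φ hper a haN ha n₀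
  · intro p hp Ψ hΨ ξ hξ1 hξ2
    have hpC : ((p:ℂ)) ≠ 0 := Nat.cast_ne_zero.mpr hp.ne'
    have hp3 : (3 : ℂ) * (p:ℂ) ≠ 0 := by
      have h0 : ((3 * p : ℕ) : ℂ) ≠ 0 := Nat.cast_ne_zero.mpr (by omega)
      push_cast at h0; exact h0
    have hπ : (Real.pi : ℂ) ≠ 0 := by exact_mod_cast Real.pi_ne_zero
    set z : ℂ := -2 * Real.pi * Complex.I * (ξ : ℂ) / (3 * (p : ℂ)) with hz
    set a' := Complex.exp z with hadef
    have hΨ' : ∀ n : ℤ, Ψ (n + ((3 * p : ℕ) : ℤ)) = Ψ n := by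
      intro n
      have h0 := hΨ n
      push_cast
      exact h0
    have haN' : a' ^ (3 * p) = 1 := by
      rw [hadef, ← Complex.exp_nat_mul]
      have harg : ((3 * p : ℕ) : ℂ) * z = ((-(ξ:ℤ) : ℤ) : ℂ) * (2 * Real.pi * Complex.I) := by
        rw [hz]
        push_cast
        field_simp
      rw [harg, Complex.exp_int_mul_two_pi_mul_I]
    have ha1 : a' ≠ 1 := by
      rw [hadef]
      intro hone
      rw [Complex.exp_eq_one_iff] at hone
      obtain ⟨n, hn⟩ := hone
      rw [hz, div_eq_iff hp3] at hn
      have hc : (2 * (Real.pi:ℂ) * Complex.I) * (-(ξ:ℂ))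
          = (2 * (Real.pi:ℂ) * Complex.I) * ((n:ℂ) * (3 * p)) := by
        linear_combination hn
      have h2πI : (2 * (Real.pi:ℂ) * Complex.I) ≠ 0 :=
        mul_ne_zero (mul_ne_zero two_ne_zero hπ) Complex.I_ne_zero
      have h4 := mul_left_cancel₀ h2πI hc
      have h5 : -(ξ:ℤ) = n * (3 * (p:ℤ)) := by exact_mod_cast h4
      have hξ1' : (1:ℤ) ≤ (ξ:ℤ) := by exact_mod_cast hξ1
      have hξ2' : (ξ:ℤ) ≤ 3 * (p:ℤ) - 1 := by omega
      have hp' : (0:ℤ) < 3 * (p:ℤ) := by omega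
      rcases le_or_gt 0 n with hn0 | hn0
      · have h6 : 0 ≤ n * (3 * (p:ℤ)) := mul_nonneg hn0 hp'.le
        linarith
      · have h6 : n * (3 * (p:ℤ)) ≤ (-1) * (3 * (p:ℤ)) :=
          mul_le_mul_of_nonneg_right (by omega) hp'.le
        linarith
    have key2 := key' (3 * p) (by omega) Ψ hΨ' a' haN' ha1 (-(p:ℤ))
    have he : (-(p:ℤ) + ((3 * p : ℕ) : ℤ) - 1) = 2 * (p:ℤ) - 1 := by push_cast; ring
    rw [he] at key2
    have hsum : ∀ n : ℤ,
        Ψ n * Complex.exp (-2 * Real.pi * Complex.I * (ξ : ℂ) * (n : ℂ) / (3 * (p : ℂ)))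
          = Ψ n * a' ^ n := by
      intro n
      congr 1
      rw [hadef, ← Complex.exp_int_mul]
      congr 1
      rw [hz]
      ring
    calc ‖∑ n ∈ Finset.Icc (-(p : ℤ)) (2 * (p : ℤ) - 1),
            Ψ n * Complex.exp (-2 * Real.pi * Complex.I * (ξ : ℂ) * (n : ℂ) / (3 * (p : ℂ)))‖
        = ‖∑ n ∈ Finset.Icc (-(p : ℤ)) (2 * (p : ℤ) - 1), Ψ n * a' ^ n‖ := by
          rw [Finset.sum_congr rfl fun n _ => hsum n]
      _ ≤ _ := key2
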